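/- (Matrix Hölder inequality for sequences, positive semidefinite case.) Let A_1, …, A_m and B_1, …, B_m be positive semidefinite complex d×d matrices and let p, q be real numbers with p, q > 1 and 1/p + 1/q = 1. Then Tr[Σ_{i=1}^m A_i B_i] ≤ (Tr[Σ_{i=1}^m A_i^p])^{1/p} · (Tr[Σ_{i=1}^m B_i^q])^{1/q}. -/

import Mathlib

open Matrix
open scoped Kronecker Classical ComplexOrder

noncomputable section

/-- The qubit depolarizing channel `Δ_ρ(φ) = ρ·φ + (1-ρ)·Tr[φ]·I/2`. -/
def delta (ρ : ℝ) (φ : Matrix (Fin 2) (Fin 2) ℂ) : Matrix (Fin 2) (Fin 2) ℂ :=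
  (ρ : ℂ) • φ + (((1 - ρ : ℝ) : ℂ) * φ.trace / 2) • (1 : Matrix (Fin 2) (Fin 2) ℂ)

/-- `Δ_ρ^{⊗n}`, the n-fold tensor power of the depolarizing channel on n qubits. -/
def deltaPow (ρ : ℝ) (n : ℕ) (M : Matrix (Fin n → Fin 2) (Fin n → Fin 2) ℂ) :
    Matrix (Fin n → Fin 2) (Fin n → Fin 2) ℂ :=
  Matrix.of fun x y => ∑ a : Fin n → Fin 2, ∑ b : Fin n → Fin 2,
    M a b * ∏ i : Fin n, delta ρ (Matrix.single (a i) (b i) 1) (x i) (y i)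

/-- The tensor product `L1 ⊗ L2` of two (linear) maps on matrix spaces. -/
def lmTensor {I I' J J' : Type*} [Fintype I] [DecidableEq I]
    (L1 : Matrix I I ℂ → Matrix I' I' ℂ) (L2 : Matrix J J ℂ → Matrix J' J' ℂ)
    (M : Matrix (I × J) (I × J) ℂ) : Matrix (I' × J') (I' × J') ℂ :=
  Matrix.of fun p q => ∑ a : I, ∑ b : I,
    L1 (Matrix.single a b 1) p.1 q.1 *
      L2 (Matrix.of fun j j' => M (a, j) (b, j')) p.2 q.2

/-- Application of a single-qubit (linear) map `L` to the `k`-th qubit of an `N`-qubit register,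
i.e. `id ⊗ ... ⊗ L ⊗ ... ⊗ id`. -/
def applyAt {N : ℕ} (k : Fin N) (L : Matrix (Fin 2) (Fin 2) ℂ → Matrix (Fin 2) (Fin 2) ℂ)
    (M : Matrix (Fin N → Fin 2) (Fin N → Fin 2) ℂ) :
    Matrix (Fin N → Fin 2) (Fin N → Fin 2) ℂ :=
  Matrix.of fun x y => ∑ a : Fin 2, ∑ b : Fin 2,
    L (Matrix.single a b 1) (x k) (y k) *
      M (Function.update x k a) (Function.update y k b)

/-- The EPR state `|Φ⟩⟨Φ|` with `|Φ⟩ = (|00⟩+|11⟩)/√2`, as a bipartite 4×4 density matrix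
(first tensor factor is Alice's qubit, the second is Bob's). -/
def EPR : Matrix (Fin 2 × Fin 2) (Fin 2 × Fin 2) ℂ :=
  Matrix.of fun p q => if p.1 = p.2 ∧ q.1 = q.2 then (1 / 2 : ℂ) else 0

/-- `Φ^{⊗n}`: n EPR pairs as a bipartite state, with the first factor holding Alice's
n qubits and the second factor holding Bob's n qubits. -/
def eprPow (n : ℕ) :
    Matrix ((Fin n → Fin 2) × (Fin n → Fin 2)) ((Fin n → Fin 2) × (Fin n → Fin 2)) ℂ :=
  Matrix.of fun p q => ∏ i : Fin n, EPR (p.1 i, p.2 i) (q.1 i, q.2 i)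

/-- The ρ-isotropic state `Φ_ρ = (Δ_ρ ⊗ id)(Φ)`. -/
def iso (ρ : ℝ) : Matrix (Fin 2 × Fin 2) (Fin 2 × Fin 2) ℂ :=
  lmTensor (delta ρ) id EPR

/-- `Φ_ρ^{⊗n}`: n isotropic states as a bipartite state, with the first factor holding
Alice's n qubits and the second factor holding Bob's n qubits. -/
def isoPow (ρ : ℝ) (n : ℕ) :
    Matrix ((Fin n → Fin 2) × (Fin n → Fin 2)) ((Fin n → Fin 2) × (Fin n → Fin 2)) ℂ :=
  Matrix.of fun p q => ∏ i : Fin n, iso ρ (p.1 i, p.2 i) (q.1 i, q.2 i)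

/-- `|A| = √(Aᴴ A)`. -/
def matAbs {I : Type*} [Fintype I] [DecidableEq I] (A : Matrix I I ℂ) : Matrix I I ℂ :=
  (Matrix.posSemidef_conjTranspose_mul_self A).1.eigenvectorUnitary.1 *
    Matrix.diagonal ((↑) ∘ (√·) ∘ (Matrix.posSemidef_conjTranspose_mul_self A).1.eigenvalues) *
    (star (Matrix.posSemidef_conjTranspose_mul_self A).1.eigenvectorUnitary : Matrix I I ℂ)

/-- Real power `A^r` of a Hermitian matrix, via the functional calculus
(junk value `0` on non-Hermitian matrices). -/
def mpow {I : Type*} [Fintype I] [DecidableEq I] (A : Matrix I I ℂ) (r : ℝ) :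
    Matrix I I ℂ :=
  if hA : A.IsHermitian then
    (Matrix.IsHermitian.eigenvectorUnitary hA : Matrix I I ℂ) *
      Matrix.diagonal (fun i => ((hA.eigenvalues i ^ r : ℝ) : ℂ)) *
      (Matrix.IsHermitian.eigenvectorUnitary hA : Matrix I I ℂ)ᴴ
  else 0

/-- The Schatten `p`-norm `‖A‖_p = (Tr[|A|^p])^{1/p}`. -/
def schatten {I : Type*} [Fintype I] [DecidableEq I] (p : ℝ) (A : Matrix I I ℂ) : ℝ :=
  ((mpow (matAbs A) p).trace).re ^ (1 / p)

/-- The spectral norm of a matrix: the largest singular value. -/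
def specNorm {I : Type*} [Fintype I] [DecidableEq I] (A : Matrix I I ℂ) : ℝ :=
  ⨆ i, Real.sqrt ((Matrix.posSemidef_conjTranspose_mul_self A).isHermitian.eigenvalues i)

/-- Partial trace over the second tensor factor. -/
def ptraceB {I J : Type*} [Fintype J] (M : Matrix (I × J) (I × J) ℂ) : Matrix I I ℂ :=
  Matrix.of fun i j => ∑ b : J, M (i, b) (j, b)

/-- A linear map between matrix algebras is completely positive if all its ampliations
`id_m ⊗ L` preserve positive semidefiniteness. -/
def IsCompletelyPositive {I J : Type*} [Fintype I] [DecidableEq I] [Fintype J]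
    (L : Matrix I I ℂ →ₗ[ℂ] Matrix J J ℂ) : Prop :=
  ∀ (m : ℕ) (M : Matrix (Fin m × I) (Fin m × I) ℂ), M.PosSemidef →
    (lmTensor (id : Matrix (Fin m) (Fin m) ℂ → Matrix (Fin m) (Fin m) ℂ) (⇑L) M).PosSemidef



lemma trace_mpow_eq' {d : ℕ} {A : Matrix (Fin d) (Fin d) ℂ} (hA : A.IsHermitian) (r : ℝ) :
    ((mpow A r).trace).re = ∑ j, hA.eigenvalues j ^ r := by
  rw [mpow, dif_pos hA, Matrix.trace_mul_cycle, ← Matrix.star_eq_conjTranspose,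
    Matrix.mem_unitaryGroup_iff'.mp (Matrix.IsHermitian.eigenvectorUnitary hA).2, one_mul,
    Matrix.trace_diagonal]
  rw [Complex.re_sum]
  simp

lemma trace_mul_re' {d : ℕ} {A B : Matrix (Fin d) (Fin d) ℂ} (hA : A.PosSemidef) (hB : B.PosSemidef) :
    ((A * B).trace).re = ∑ j, ∑ k, hA.1.eigenvalues j * hB.1.eigenvalues k *
      Complex.normSq ((star (hA.1.eigenvectorUnitary : Matrix (Fin d) (Fin d) ℂ) *
        (hB.1.eigenvectorUnitary : Matrix (Fin d) (Fin d) ℂ)) j k) := by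
  set U := (hA.1.eigenvectorUnitary : Matrix (Fin d) (Fin d) ℂ)
  set V := (hB.1.eigenvectorUnitary : Matrix (Fin d) (Fin d) ℂ)
  set C := star U * V with hC
  set Dl := Matrix.diagonal (fun i => (hA.1.eigenvalues i : ℂ)) with hDl
  set Dm := Matrix.diagonal (fun i => (hB.1.eigenvalues i : ℂ)) with hDm
  have hUU : U * Uᴴ = 1 := by
    rw [← Matrix.star_eq_conjTranspose]
    exact Matrix.mem_unitaryGroup_iff.mp hA.1.eigenvectorUnitary.2
  have h1 : A * B = U * (Dl * C * Dm * star C) * star U := by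
    nth_rewrite 1 [hA.1.spectral_theorem, hB.1.spectral_theorem]
    simp only [hC, Matrix.star_mul, star_star, hDl, hDm, Function.comp_def]
    simp only [Matrix.mul_assoc]
    norm_num [Matrix.star_eq_conjTranspose, hUU]
    simp only [Matrix.mul_assoc]
    rfl
  rw [h1, Matrix.trace_mul_cycle,
    Matrix.mem_unitaryGroup_iff'.mp (hA.1.eigenvectorUnitary).2, one_mul]
  rw [Matrix.trace, Complex.re_sum]
  congr 1; ext j
  rw [Matrix.diag_apply, Matrix.mul_assoc, Matrix.mul_assoc]
  simp only [hDl, hDm, Matrix.mul_apply, Matrix.diagonal_apply, ite_mul, zero_mul,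
    Finset.sum_ite_eq, Finset.mem_univ, if_true, Matrix.star_apply]
  rw [Finset.mul_sum, Complex.re_sum]
  congr 1; ext k
  have : ((hA.1.eigenvalues j : ℂ) * (C j k * ((hB.1.eigenvalues k : ℂ) * star (C j k)))) =
      ((hA.1.eigenvalues j * hB.1.eigenvalues k * Complex.normSq (C j k) : ℝ) : ℂ) := by
    push_cast
    rw [← Complex.mul_conj]
    ring_nf
    rfl
  rw [this, Complex.ofReal_re]

lemma holder_one' {d : ℕ} {A B : Matrix (Fin d) (Fin d) ℂ} (hA : A.PosSemidef) (hB : B.PosSemidef)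
    {p q : ℝ} (hp : 1 < p) (hq : 1 < q) (hpq : 1 / p + 1 / q = 1) :
    ((A * B).trace).re ≤ ((mpow A p).trace).re ^ (1 / p) * ((mpow B q).trace).re ^ (1 / q) := by
  have hp0 : p ≠ 0 := by positivity
  have hq0 : q ≠ 0 := by positivity
  set U := (hA.1.eigenvectorUnitary : Matrix (Fin d) (Fin d) ℂ)
  set V := (hB.1.eigenvectorUnitary : Matrix (Fin d) (Fin d) ℂ)
  set C := star U * V with hC
  set l := hA.1.eigenvalues with hl
  set m := hB.1.eigenvalues with hm
  set s := fun (j k : Fin d) => Complex.normSq (C j k) with hs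
  have hl0 : ∀ j, 0 ≤ l j := hA.eigenvalues_nonneg
  have hm0 : ∀ k, 0 ≤ m k := hB.eigenvalues_nonneg
  have hs0 : ∀ j k, 0 ≤ s j k := fun j k => Complex.normSq_nonneg _
  have hUU' : star U * U = 1 := Matrix.mem_unitaryGroup_iff'.mp hA.1.eigenvectorUnitary.2
  have hVV : V * star V = 1 := Matrix.mem_unitaryGroup_iff.mp hB.1.eigenvectorUnitary.2
  have hVV' : star V * V = 1 := Matrix.mem_unitaryGroup_iff'.mp hB.1.eigenvectorUnitary.2
  have hUU : U * star U = 1 := Matrix.mem_unitaryGroup_iff.mp hA.1.eigenvectorUnitary.2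
  have hrow : ∀ j, ∑ k, s j k = 1 := by
    intro j
    have hCC : C * star C = 1 := by
      simp only [hC, Matrix.star_mul, star_star]
      rw [Matrix.mul_assoc, ← Matrix.mul_assoc V, hVV, Matrix.one_mul, hUU']
    have := congrArg (fun M => (M j j).re) hCC
    simpa [Matrix.mul_apply, Matrix.star_apply, Complex.re_sum, Complex.mul_conj,
      Matrix.one_apply, hs] using this
  have hcol : ∀ k, ∑ j, s j k = 1 := by
    intro k
    have hCC : star C * C = 1 := by
      simp only [hC, Matrix.star_mul, star_star]
      rw [Matrix.mul_assoc, ← Matrix.mul_assoc U, hUU, Matrix.one_mul, hVV']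
    have := congrArg (fun M => (M k k).re) hCC
    simpa [Matrix.mul_apply, Matrix.star_apply, Complex.re_sum, Complex.mul_conj', Complex.normSq_apply,
      Matrix.one_apply, hs] using this
  rw [trace_mul_re' hA hB, trace_mpow_eq' hA.1 p, trace_mpow_eq' hB.1 q]
  have hconj : Real.HolderConjugate p q := Real.holderConjugate_iff.mpr ⟨hp, by simpa [one_div] using hpq⟩
  have key := Real.inner_le_Lp_mul_Lq_of_nonneg (s := (Finset.univ : Finset (Fin d × Fin d)))
    (f := fun jk => l jk.1 * s jk.1 jk.2 ^ (1 / p))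
    (g := fun jk => m jk.2 * s jk.1 jk.2 ^ (1 / q)) hconj
    (fun i _ => mul_nonneg (hl0 _) (Real.rpow_nonneg (hs0 _ _) _))
    (fun i _ => mul_nonneg (hm0 _) (Real.rpow_nonneg (hs0 _ _) _))
  have e1 : ∑ jk : Fin d × Fin d, (l jk.1 * s jk.1 jk.2 ^ (1 / p)) * (m jk.2 * s jk.1 jk.2 ^ (1 / q))
      = ∑ j, ∑ k, l j * m k * s j k := by
    rw [Fintype.sum_prod_type]
    refine Finset.sum_congr rfl fun j _ => Finset.sum_congr rfl fun k _ => ?_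
    rw [show (l j * s j k ^ (1 / p)) * (m k * s j k ^ (1 / q))
        = l j * m k * (s j k ^ (1 / p) * s j k ^ (1 / q)) by ring,
      ← Real.rpow_add_of_nonneg (hs0 _ _) (by positivity) (by positivity), hpq, Real.rpow_one]
  have spow : ∀ (j k : Fin d) (r : ℝ), r ≠ 0 → (s j k ^ (1 / r)) ^ r = s j k := by
    intro j k r hr
    rw [← Real.rpow_mul (hs0 _ _), one_div_mul_cancel hr, Real.rpow_one]
  have e2 : ∑ jk : Fin d × Fin d, (l jk.1 * s jk.1 jk.2 ^ (1 / p)) ^ p = ∑ j, l j ^ p := by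
    rw [Fintype.sum_prod_type]
    refine Finset.sum_congr rfl fun j _ => ?_
    have : ∀ k, (l j * s j k ^ (1 / p)) ^ p = l j ^ p * s j k := fun k => by
      rw [Real.mul_rpow (hl0 _) (Real.rpow_nonneg (hs0 _ _) _), spow j k p hp0]
    simp only [this, ← Finset.mul_sum, hrow, mul_one]
  have e3 : ∑ jk : Fin d × Fin d, (m jk.2 * s jk.1 jk.2 ^ (1 / q)) ^ q = ∑ k, m k ^ q := by
    rw [Fintype.sum_prod_type, Finset.sum_comm]
    refine Finset.sum_congr rfl fun k _ => ?_
    have : ∀ j, (m k * s j k ^ (1 / q)) ^ q = m k ^ q * s j k := fun j => by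
      rw [Real.mul_rpow (hm0 _) (Real.rpow_nonneg (hs0 _ _) _), spow j k q hq0]
    simp only [this, ← Finset.mul_sum, hcol, mul_one]
  rw [e1, e2, e3] at key
  exact key

/-- Matrix Hölder inequality for sequences of positive semidefinite matrices. -/
theorem stmt5 (d m : ℕ) (A B : Fin m → Matrix (Fin d) (Fin d) ℂ)
    (hA : ∀ i, (A i).PosSemidef) (hB : ∀ i, (B i).PosSemidef)
    (p q : ℝ) (hp : 1 < p) (hq : 1 < q) (hpq : 1 / p + 1 / q = 1) :
    ((∑ i, A i * B i).trace).re ≤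
      (((∑ i, mpow (A i) p).trace).re) ^ (1 / p) *
        (((∑ i, mpow (B i) q).trace).re) ^ (1 / q) := by
  have hp0 : p ≠ 0 := by positivity
  have hq0 : q ≠ 0 := by positivity
  have hconj : Real.HolderConjugate p q := Real.holderConjugate_iff.mpr ⟨hp, by simpa [one_div] using hpq⟩
  set x := fun i => ((mpow (A i) p).trace).re with hx
  set y := fun i => ((mpow (B i) q).trace).re with hy
  have hx0 : ∀ i, 0 ≤ x i := fun i => by
    rw [hx]
    simp only
    rw [trace_mpow_eq' (hA i).1]
    exact Finset.sum_nonneg fun j _ => Real.rpow_nonneg ((hA i).eigenvalues_nonneg j) _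
  have hy0 : ∀ i, 0 ≤ y i := fun i => by
    rw [hy]
    simp only
    rw [trace_mpow_eq' (hB i).1]
    exact Finset.sum_nonneg fun j _ => Real.rpow_nonneg ((hB i).eigenvalues_nonneg j) _
  have key := Real.inner_le_Lp_mul_Lq_of_nonneg (s := (Finset.univ : Finset (Fin m)))
    (f := fun i => x i ^ (1 / p)) (g := fun i => y i ^ (1 / q)) hconj
    (fun i _ => Real.rpow_nonneg (hx0 i) _) (fun i _ => Real.rpow_nonneg (hy0 i) _)
  have e2 : ∀ i, (x i ^ (1 / p)) ^ p = x i := fun i => by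
    rw [← Real.rpow_mul (hx0 i), one_div_mul_cancel hp0, Real.rpow_one]
  have e3 : ∀ i, (y i ^ (1 / q)) ^ q = y i := fun i => by
    rw [← Real.rpow_mul (hy0 i), one_div_mul_cancel hq0, Real.rpow_one]
  simp only [e2, e3] at key
  simp only [Matrix.trace_sum, Complex.re_sum]
  calc ∑ i, ((A i * B i).trace).re
      ≤ ∑ i, x i ^ (1 / p) * y i ^ (1 / q) :=
        Finset.sum_le_sum fun i _ => holder_one' (hA i) (hB i) hp hq hpq
    _ ≤ (∑ i, x i) ^ (1 / p) * (∑ i, y i) ^ (1 / q) := key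


end
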